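/- arXiv:2411.06280 — 2 statements merged into one kernel-verified Lean document; each statement's English description precedes it below -/
import Mathlib

section
/- There exists an order ω on the one-sided stationary generalized Pascal-Bratteli diagram B such that both the set of ω-minimal infinite paths and the set of ω-maximal infinite paths in X_B have the cardinality of the continuum (2^ℵ₀). -/
/-- An infinite path in the one-sided stationary generalized Pascal-Bratteli diagram `B`:
a sequence of vertices `v n ≥ 1` with `v (n+1) ∈ {v n, v n + 1}`. -/
def IsPathB (v : ℕ → ℕ) : Prop :=
  (∀ n, 1 ≤ v n) ∧ ∀ n, v (n + 1) = v n ∨ v (n + 1) = v n + 1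

/-- The path `v` is minimal for the order `ω` (first argument of `ω` is the vertex,
second is the level): for every `n`, either `v (n+1) = 1` (unique incoming edge), or the
step type `v (n+1) - v n` equals the minimal step type `ω (v (n+1), n+1)`. -/
def MinPathB (ω : ℕ × ℕ → Bool) (v : ℕ → ℕ) : Prop :=
  ∀ n : ℕ, v (n + 1) = 1 ∨ v (n + 1) - v n = (if ω (v (n + 1), n + 1) then 1 else 0)

/-- The path `v` is maximal for the order `ω`. -/
def MaxPathB (ω : ℕ × ℕ → Bool) (v : ℕ → ℕ) : Prop :=
  ∀ n : ℕ, v (n + 1) = 1 ∨ v (n + 1) - v n = (if ω (v (n + 1), n + 1) then 0 else 1)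

open scoped Classical

/-- An enumeration of the rationals. -/
noncomputable def qq : ℕ → ℚ := fun n => (Denumerable.eqv ℚ).symm n

lemma qq_sur : Function.Surjective qq := (Denumerable.eqv ℚ).symm.surjective

/-- Number of `i < n` with `qq i < r`. -/
noncomputable def cnt (r : ℝ) (n : ℕ) : ℕ :=
  ∑ i ∈ Finset.range n, if ((qq i : ℝ) < r) then 1 else 0

/-- Rank of `qq m` among `qq 0, …, qq m`. -/
noncomputable def rk (m : ℕ) : ℕ :=
  ∑ i ∈ Finset.range (m + 1), if qq i ≤ qq m then 1 else 0

lemma cnt_succ (r : ℝ) (m : ℕ) :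
    cnt r (m + 1) = cnt r m + (if ((qq m : ℝ) < r) then 1 else 0) :=
  Finset.sum_range_succ _ _

lemma cnt_succ_pos (r : ℝ) (m : ℕ) (h : (qq m : ℝ) < r) :
    cnt r (m + 1) = cnt r m + 1 := by rw [cnt_succ, if_pos h]

lemma cnt_succ_neg (r : ℝ) (m : ℕ) (h : ¬ ((qq m : ℝ) < r)) :
    cnt r (m + 1) = cnt r m := by rw [cnt_succ, if_neg h]; omega

lemma cnt_le (r : ℝ) (n : ℕ) : cnt r n ≤ n := by
  calc cnt r n ≤ ∑ _i ∈ Finset.range n, 1 := by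
        apply Finset.sum_le_sum; intro i _; split <;> simp
    _ = n := by simp

lemma rk_le (m : ℕ) : rk m ≤ m + 1 := by
  calc rk m ≤ ∑ _i ∈ Finset.range (m + 1), 1 := by
        apply Finset.sum_le_sum; intro i _; split <;> simp
    _ = m + 1 := by simp

/-- Key claim: the rank of `qq m` is at most the cut count iff `qq m < r`. -/
lemma rk_le_cnt_iff (r : ℝ) (m : ℕ) : rk m ≤ cnt r (m + 1) ↔ ((qq m : ℝ) < r) := by
  constructor
  · intro h
    by_contra hr
    push_neg at hr
    have : cnt r (m + 1) < rk m := by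
      apply Finset.sum_lt_sum
      · intro i _
        by_cases hi : ((qq i : ℝ) < r)
        · have h1 : (qq i : ℝ) < (qq m : ℝ) := lt_of_lt_of_le hi hr
          have h2 : qq i ≤ qq m := le_of_lt (by exact_mod_cast h1)
          simp [hi, h2]
        · simp [hi]
      · refine ⟨m, Finset.self_mem_range_succ m, ?_⟩
        have : ¬ ((qq m : ℝ) < r) := not_lt.mpr hr
        simp [this]
    omega
  · intro h
    apply Finset.sum_le_sum
    intro i _
    by_cases hi : qq i ≤ qq m
    · have : (qq i : ℝ) < r := lt_of_le_of_lt (by exact_mod_cast hi) h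
      simp [hi, this]
    · simp [hi]

/-- The order on the diagram. -/
noncomputable def ff : ℕ × ℕ → Bool := fun p =>
  if p.2 % 2 = 0 then false
  else if p.1 ≤ p.2 / 2 + 2 then decide (rk (p.2 / 2) ≤ p.1 - 1)
  else decide (¬ rk (p.2 / 2) ≤ p.1 - (p.2 / 2 + 2))

/-- The minimal path attached to a real `r`. -/
noncomputable def vp (r : ℝ) : ℕ → ℕ := fun n => 1 + cnt r ((n + 1) / 2)

/-- The maximal path attached to a real `r`. -/
noncomputable def wp (r : ℝ) : ℕ → ℕ := fun n => 2 + n / 2 + cnt r ((n + 1) / 2)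

lemma isPath_vp (r : ℝ) : IsPathB (vp r) := by
  constructor
  · intro n; simp [vp]
  · intro n
    rcases Nat.even_or_odd n with ⟨m, rfl⟩ | ⟨m, rfl⟩
    · have h1 : (m + m + 1 + 1) / 2 = m + 1 := by omega
      have h2 : (m + m + 1) / 2 = m := by omega
      by_cases h : ((qq m : ℝ) < r)
      · right; simp only [vp, h1, h2, cnt_succ_pos r m h]; omega
      · left; simp only [vp, h1, h2, cnt_succ_neg r m h]
    · left
      have h1 : (2 * m + 1 + 1 + 1) / 2 = m + 1 := by omega
      have h2 : (2 * m + 1 + 1) / 2 = m + 1 := by omega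
      simp only [vp, h1, h2]

lemma isPath_wp (r : ℝ) : IsPathB (wp r) := by
  constructor
  · intro n; simp [wp]; omega
  · intro n
    rcases Nat.even_or_odd n with ⟨m, rfl⟩ | ⟨m, rfl⟩
    · have h1 : (m + m + 1 + 1) / 2 = m + 1 := by omega
      have h2 : (m + m + 1) / 2 = m := by omega
      have h4 : (m + m) / 2 = m := by omega
      by_cases h : ((qq m : ℝ) < r)
      · right; simp only [wp, h1, h2, h4, cnt_succ_pos r m h]; omega
      · left; simp only [wp, h1, h2, h4, cnt_succ_neg r m h]
    · right
      have h1 : (2 * m + 1 + 1 + 1) / 2 = m + 1 := by omega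
      have h2 : (2 * m + 1 + 1) / 2 = m + 1 := by omega
      have h3 : (2 * m + 1) / 2 = m := by omega
      simp only [wp, h1, h2, h3]; omega

lemma minPath_vp (r : ℝ) : MinPathB ff (vp r) := by
  intro n
  right
  rcases Nat.even_or_odd n with ⟨m, rfl⟩ | ⟨m, rfl⟩
  · -- n = m + m, level n+1 = 2m+1 is odd
    have h1 : (m + m + 1 + 1) / 2 = m + 1 := by omega
    have h2 : (m + m + 1) / 2 = m := by omega
    have hmod : (m + m + 1) % 2 = 1 := by omega
    have hC : cnt r (m + 1) ≤ m + 1 := cnt_le r (m + 1)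
    have hle : vp r (m + m + 1) ≤ m + 2 := by
      simp only [vp, h1]; omega
    have hval : ff (vp r (m + m + 1), m + m + 1)
        = decide (rk m ≤ cnt r (m + 1)) := by
      simp only [ff, hmod, h2]
      rw [if_neg (by omega), if_pos hle]
      simp [vp, h1]
    by_cases h : ((qq m : ℝ) < r)
    · have hrk : rk m ≤ cnt r (m + 1) := (rk_le_cnt_iff r m).mpr h
      have hb : ff (vp r (m + m + 1), m + m + 1) = true := by
        rw [hval]; exact decide_eq_true hrk
      rw [hb]
      show vp r (m + m + 1) - vp r (m + m) = 1
      simp only [vp, h1, h2, cnt_succ_pos r m h]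
      omega
    · have hrk : ¬ rk m ≤ cnt r (m + 1) := fun hh => h ((rk_le_cnt_iff r m).mp hh)
      have hb : ff (vp r (m + m + 1), m + m + 1) = false := by
        rw [hval]; exact decide_eq_false hrk
      rw [hb]
      show vp r (m + m + 1) - vp r (m + m) = 0
      simp only [vp, h1, h2, cnt_succ_neg r m h]
      omega
  · -- n = 2m+1, level n+1 = 2m+2 is even
    have hmod : (2 * m + 1 + 1) % 2 = 0 := by omega
    have h1 : (2 * m + 1 + 1 + 1) / 2 = m + 1 := by omega
    have h2 : (2 * m + 1 + 1) / 2 = m + 1 := by omega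
    have hb : ff (vp r (2 * m + 1 + 1), 2 * m + 1 + 1) = false := by
      simp [ff, hmod]
    rw [hb]
    show vp r (2 * m + 1 + 1) - vp r (2 * m + 1) = 0
    simp only [vp, h1, h2]
    omega

lemma maxPath_wp (r : ℝ) : MaxPathB ff (wp r) := by
  intro n
  right
  rcases Nat.even_or_odd n with ⟨m, rfl⟩ | ⟨m, rfl⟩
  · -- n = m + m, level n+1 = 2m+1 is odd
    have h1 : (m + m + 1 + 1) / 2 = m + 1 := by omega
    have h2 : (m + m + 1) / 2 = m := by omega
    have hmod : (m + m + 1) % 2 = 1 := by omega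
    have hw1 : wp r (m + m + 1) = 2 + m + cnt r (m + 1) := by
      simp only [wp, h1, h2]
    have hw0 : wp r (m + m) = 2 + m + cnt r m := by
      have h4 : (m + m) / 2 = m := by omega
      have h5 : (m + m + 1) / 2 = m := by omega
      simp only [wp, h4, h5]
    by_cases hC0 : cnt r (m + 1) = 0
    · -- j = m + 2, ff = true, step must be 0
      have hcm : cnt r m = 0 := by
        have := cnt_succ r m
        omega
      have hb : ff (wp r (m + m + 1), m + m + 1) = true := by
        simp only [ff, hmod, h2, hw1, hC0]
        rw [if_neg (by omega), if_pos (by omega)]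
        apply decide_eq_true
        have := rk_le m
        omega
      rw [hb]
      show wp r (m + m + 1) - wp r (m + m) = 0
      rw [hw1, hw0, hC0, hcm]
      omega
    · -- j = m + 2 + C with C ≥ 1
      have hC1 : 1 ≤ cnt r (m + 1) := Nat.one_le_iff_ne_zero.mpr hC0
      have hval : ff (wp r (m + m + 1), m + m + 1)
          = decide (¬ rk m ≤ cnt r (m + 1)) := by
        simp only [ff, hmod, h2, hw1]
        rw [if_neg (by omega), if_neg (by omega)]
        congr 1
        have heq : 2 + m + cnt r (m + 1) - (m + 2) = cnt r (m + 1) := by omega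
        rw [heq]
      by_cases h : ((qq m : ℝ) < r)
      · have hrk : rk m ≤ cnt r (m + 1) := (rk_le_cnt_iff r m).mpr h
        have hb : ff (wp r (m + m + 1), m + m + 1) = false := by
          rw [hval]; exact decide_eq_false (not_not_intro hrk)
        rw [hb]
        show wp r (m + m + 1) - wp r (m + m) = 1
        rw [hw1, hw0, cnt_succ_pos r m h]
        omega
      · have hrk : ¬ rk m ≤ cnt r (m + 1) := fun hh => h ((rk_le_cnt_iff r m).mp hh)
        have hb : ff (wp r (m + m + 1), m + m + 1) = true := by
          rw [hval]; exact decide_eq_true hrk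
        rw [hb]
        show wp r (m + m + 1) - wp r (m + m) = 0
        rw [hw1, hw0, cnt_succ_neg r m h]
        omega
  · -- n = 2m+1, level n+1 = 2m+2 is even, all max paths step 1
    have hmod : (2 * m + 1 + 1) % 2 = 0 := by omega
    have h1 : (2 * m + 1 + 1 + 1) / 2 = m + 1 := by omega
    have h2 : (2 * m + 1 + 1) / 2 = m + 1 := by omega
    have h3 : (2 * m + 1) / 2 = m := by omega
    have hb : ff (wp r (2 * m + 1 + 1), 2 * m + 1 + 1) = false := by
      simp [ff, hmod]
    rw [hb]
    show wp r (2 * m + 1 + 1) - wp r (2 * m + 1) = 1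
    simp only [wp, h1, h2, h3]
    omega

/-- Strictly larger reals have a level with strictly larger count. -/
lemma exists_cnt_lt {r r' : ℝ} (h : r < r') : ∃ n, cnt r (n + 1) < cnt r' (n + 1) := by
  obtain ⟨x, hx1, hx2⟩ := exists_rat_btwn h
  obtain ⟨i, hi⟩ := qq_sur x
  refine ⟨i, ?_⟩
  apply Finset.sum_lt_sum
  · intro j _
    by_cases hj : ((qq j : ℝ) < r)
    · have : (qq j : ℝ) < r' := lt_trans hj h
      simp [hj, this]
    · simp [hj]
  · refine ⟨i, Finset.self_mem_range_succ i, ?_⟩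
    have hA : ¬ ((qq i : ℝ) < r) := by rw [hi]; exact not_lt.mpr (le_of_lt hx1)
    have hB : (qq i : ℝ) < r' := by rw [hi]; exact hx2
    simp [hA, hB]

lemma cnt_ne_of_ne {r r' : ℝ} (h : r ≠ r') : ∃ n, cnt r (n + 1) ≠ cnt r' (n + 1) := by
  rcases lt_or_gt_of_ne h with hlt | hgt
  · obtain ⟨n, hn⟩ := exists_cnt_lt hlt; exact ⟨n, by omega⟩
  · obtain ⟨n, hn⟩ := exists_cnt_lt hgt; exact ⟨n, by omega⟩

lemma vp_inj : Function.Injective vp := by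
  intro r r' h
  by_contra hne
  obtain ⟨n, hn⟩ := cnt_ne_of_ne hne
  have := congrFun h (2 * (n + 1))
  have hd : (2 * (n + 1) + 1) / 2 = n + 1 := by omega
  simp only [vp, hd] at this
  omega

lemma wp_inj : Function.Injective wp := by
  intro r r' h
  by_contra hne
  obtain ⟨n, hn⟩ := cnt_ne_of_ne hne
  have := congrFun h (2 * (n + 1))
  have hd : (2 * (n + 1) + 1) / 2 = n + 1 := by omega
  simp only [wp, hd] at this
  omega

lemma mk_nat_arrow : Cardinal.mk (ℕ → ℕ) = Cardinal.continuum := by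
  rw [← Cardinal.power_def, Cardinal.mk_nat, Cardinal.power_self_eq le_rfl,
    Cardinal.two_power_aleph0]

/-- there is an order on `B` with continuum many minimal infinite paths and
continuum many maximal infinite paths. -/
theorem one_sided_order_continuum_min_max :
    ∃ ω : ℕ × ℕ → Bool,
      Cardinal.mk {v : ℕ → ℕ | IsPathB v ∧ MinPathB ω v} = Cardinal.continuum ∧
      Cardinal.mk {v : ℕ → ℕ | IsPathB v ∧ MaxPathB ω v} = Cardinal.continuum := by
  refine ⟨ff, ?_, ?_⟩
  · apply le_antisymm
    · exact (Cardinal.mk_set_le _).trans_eq mk_nat_arrow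
    · have hinj : Function.Injective
          (fun r : ℝ => (⟨vp r, isPath_vp r, minPath_vp r⟩ :
            {v : ℕ → ℕ | IsPathB v ∧ MinPathB ff v})) := by
        intro r r' h
        exact vp_inj (congrArg Subtype.val h)
      have := Cardinal.mk_le_of_injective hinj
      rwa [Cardinal.mk_real] at this
  · apply le_antisymm
    · exact (Cardinal.mk_set_le _).trans_eq mk_nat_arrow
    · have hinj : Function.Injective
          (fun r : ℝ => (⟨wp r, isPath_wp r, maxPath_wp r⟩ :
            {v : ℕ → ℕ | IsPathB v ∧ MaxPathB ff v})) := by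
        intro r r' h
        exact wp_inj (congrArg Subtype.val h)
      have := Cardinal.mk_le_of_injective hinj
      rwa [Cardinal.mk_real] at this
end

section
/- There exists an order ω on the one-sided stationary generalized Pascal-Bratteli diagram B such that the set of ω-minimal infinite paths in X_B has the cardinality of the continuum (2^ℵ₀) while the set of ω-maximal infinite paths is countably infinite. -/
namespace PB

/-- The "sweep" function: on `[2^q, 2^(q+1))`, `phi` descends from `2^q + 1` to `2`. -/
def phi (t : ℕ) : ℕ := 2 ^ (Nat.log 2 t + 1) + 1 - t

/-- Safe columns. -/
def Safe (j : ℕ) : Prop := ∃ m, j = 5 * 2 ^ m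

def safeB (j : ℕ) : Bool := j == 5 * 2 ^ (Nat.log 2 (j / 5))

/-- The order. -/
def om : ℕ × ℕ → Bool := fun p => safeB p.1 || decide (phi p.2 ≤ p.1)

lemma safeB_iff {j : ℕ} : safeB j = true ↔ Safe j := by
  constructor
  · intro h
    rw [safeB, beq_iff_eq] at h
    exact ⟨_, h⟩
  · rintro ⟨m, rfl⟩
    have h5 : (5 * 2 ^ m) / 5 = 2 ^ m := by
      rw [Nat.mul_div_cancel_left _ (by norm_num)]
    rw [safeB, beq_iff_eq, h5, Nat.log_pow (by norm_num : 1 < 2)]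

lemma om_eq_true {j k : ℕ} : om (j, k) = true ↔ (Safe j ∨ phi k ≤ j) := by
  simp [om, safeB_iff]

lemma om_eq_false {j k : ℕ} : om (j, k) = false ↔ (¬ Safe j ∧ j < phi k) := by
  rw [← Bool.not_eq_true, om_eq_true]
  push_neg
  constructor
  · rintro ⟨h1, h2⟩; exact ⟨h1, by omega⟩
  · rintro ⟨h1, h2⟩; exact ⟨h1, by omega⟩

lemma phi_eq {q t : ℕ} (h1 : 2 ^ q ≤ t) (h2 : t < 2 ^ (q + 1)) :
    phi t = 2 ^ (q + 1) + 1 - t := by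
  unfold phi
  rw [Nat.log_eq_of_pow_le_of_lt_pow h1 h2]

lemma phi_pow (m : ℕ) : phi (2 ^ m) = 2 ^ m + 1 := by
  have h := phi_eq (le_refl (2 ^ m)) (by
    have h1 : (2:ℕ) ^ (m+1) = 2 * 2 ^ m := by ring
    have hp : 1 ≤ (2:ℕ)^m := Nat.one_le_two_pow
    omega)
  rw [h]
  have : (2:ℕ) ^ (m+1) = 2 * 2 ^ m := by ring
  have hp : 1 ≤ (2:ℕ)^m := Nat.one_le_two_pow
  omega

/-! ### The minimal-path family -/

def bb (s : ℕ → Bool) : ℕ → ℕ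
  | 0 => 0
  | 1 => 0
  | 2 => 0
  | 3 => 1
  | (q + 4) => if s q then 1 else 0

def HH (s : ℕ → Bool) : ℕ → ℕ
  | 0 => 1
  | 1 => 1
  | 2 => 2
  | (q + 3) => 2 * HH s (q + 2) + bb s (q + 3) - 1

def vv (s : ℕ → Bool) (t : ℕ) : ℕ :=
  if t < 7 then 1
  else HH s (Nat.log 2 (t + 1) - 1) +
    (t + bb s (Nat.log 2 (t + 1) - 1 + 1) -
      (2 ^ (Nat.log 2 (t + 1) - 1 + 2) - HH s (Nat.log 2 (t + 1) - 1)))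

lemma bb_le (s : ℕ → Bool) : ∀ q, bb s q ≤ 1
  | 0 => by simp [bb]
  | 1 => by simp [bb]
  | 2 => by simp [bb]
  | 3 => by simp [bb]
  | (q + 4) => by simp only [bb]; split <;> omega

lemma HH_succ (s : ℕ → Bool) (r : ℕ) :
    HH s (r + 3) = 2 * HH s (r + 2) + bb s (r + 3) - 1 := rfl

lemma HH_two_le (s : ℕ → Bool) : ∀ r, 2 ≤ HH s (r + 2)
  | 0 => le_refl _
  | (r + 1) => by
      have ih := HH_two_le s r
      rw [HH_succ]
      omega

lemma HH_pos (s : ℕ → Bool) : ∀ q, 1 ≤ HH s q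
  | 0 => le_refl _
  | 1 => le_refl _
  | (q + 2) => le_trans (by norm_num) (HH_two_le s q)

lemma HH_le (s : ℕ → Bool) : ∀ r, 8 * HH s (r + 2) ≤ 2 ^ (r + 4)
  | 0 => by norm_num [HH]
  | (r + 1) => by
      show 8 * HH s (r + 3) ≤ 2 ^ (r + 5)
      have ih := HH_le s r
      have hb := bb_le s (r + 3)
      have h2 := HH_two_le s r
      have hp : (2:ℕ) ^ (r + 5) = 2 * 2 ^ (r + 4) := by ring
      rw [HH_succ]
      omega

lemma HH_le' (s : ℕ → Bool) {q : ℕ} (hq : 2 ≤ q) : 8 * HH s q ≤ 2 ^ (q + 2) := by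
  obtain ⟨r, rfl⟩ := Nat.exists_eq_add_of_le hq
  have h := HH_le s r
  have e : 2 + r = r + 2 := by omega
  rw [e]
  have e2 : r + 2 + 2 = r + 4 := by omega
  rw [e2]
  exact h

lemma HH_lower (s : ℕ → Bool) : ∀ r, 3 * 2 ^ (r + 1) < HH s (r + 4)
  | 0 => by
      have h3 : HH s 3 = 4 := by norm_num [HH, bb]
      have h4 : HH s 4 = 2 * HH s 3 + bb s 4 - 1 := HH_succ s 1
      have hb : bb s 4 ≤ 1 := bb_le s 4
      rw [h4, h3]
      norm_num
      omega
  | (r + 1) => by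
      show 3 * 2 ^ (r + 2) < HH s (r + 5)
      have ih := HH_lower s r
      have hb := bb_le s (r + 5)
      have hp : (2:ℕ) ^ (r + 2) = 2 * 2 ^ (r + 1) := by ring
      have h2 := HH_two_le s (r + 2)
      have hs : HH s (r + 5) = 2 * HH s (r + 4) + bb s (r + 5) - 1 := HH_succ s (r + 2)
      rw [hs]
      omega

lemma not_safe_HH (s : ℕ → Bool) : ∀ q, 2 ≤ q → ¬ Safe (HH s q)
  | 0, h => by omega
  | 1, h => by omega
  | 2, _ => by
      rintro ⟨m, hm⟩
      have : 1 ≤ (2:ℕ)^m := Nat.one_le_two_pow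
      simp only [HH] at hm
      omega
  | 3, _ => by
      rintro ⟨m, hm⟩
      have h3 : HH s 3 = 4 := by norm_num [HH, bb]
      have : 1 ≤ (2:ℕ)^m := Nat.one_le_two_pow
      omega
  | (r + 4), _ => by
      rintro ⟨m, hm⟩
      have h1 := HH_lower s r
      have h2 : 8 * HH s (r + 4) ≤ 2 ^ (r + 6) := HH_le' s (by omega)
      have hp1 : (2:ℕ) ^ (r + 6) = 32 * 2 ^ (r + 1) := by ring
      -- so 3 * 2^(r+1) < 5 * 2^m and 8 * 5 * 2^m ≤ 32 * 2^(r+1), i.e. 5*2^m ≤ 4*2^(r+1)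
      rcases le_or_gt m r with hle | hlt
      · have : (2:ℕ) ^ m ≤ 2 ^ r := Nat.pow_le_pow_right (by norm_num) hle
        have hp2 : (2:ℕ) ^ (r + 1) = 2 * 2 ^ r := by ring
        omega
      · have : (2:ℕ) ^ (r + 1) ≤ 2 ^ m := Nat.pow_le_pow_right (by norm_num) hlt
        have hp2 : (2:ℕ) ^ (r + 1) = 2 * 2 ^ r := by ring
        omega

lemma vv_small (s : ℕ → Bool) {t : ℕ} (h : t < 7) : vv s t = 1 := by
  rw [vv, if_pos h]

lemma vv_in_window (s : ℕ → Bool) {q t : ℕ} (hq : 2 ≤ q)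
    (h1 : 2 ^ (q + 1) ≤ t + 1) (h2 : t + 1 < 2 ^ (q + 2)) :
    vv s t = HH s q + (t + bb s (q + 1) - (2 ^ (q + 2) - HH s q)) := by
  have hlog : Nat.log 2 (t + 1) = q + 1 := Nat.log_eq_of_pow_le_of_lt_pow h1 h2
  have h8 : (8:ℕ) ≤ 2 ^ (q + 1) := by
    calc (8:ℕ) = 2 ^ 3 := by norm_num
    _ ≤ 2 ^ (q + 1) := Nat.pow_le_pow_right (by norm_num) (by omega)
  have ht7 : ¬ t < 7 := by omega
  rw [vv, if_neg ht7, hlog]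
  simp

lemma HH_two_le' (s : ℕ → Bool) {q : ℕ} (hq : 2 ≤ q) : 2 ≤ HH s q := by
  obtain ⟨r, rfl⟩ := Nat.exists_eq_add_of_le hq
  have e : 2 + r = r + 2 := by omega
  rw [e]
  exact HH_two_le s r

lemma HH_succ' (s : ℕ → Bool) {q : ℕ} (hq : 2 ≤ q) :
    HH s (q + 1) = 2 * HH s q + bb s (q + 1) - 1 := by
  obtain ⟨r, rfl⟩ := Nat.exists_eq_add_of_le hq
  have e : 2 + r = r + 2 := by omega
  rw [e]
  exact HH_succ s r

lemma key_step (s : ℕ → Bool) (n : ℕ) :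
    (vv s (n + 1) = vv s n ∧ (vv s (n + 1) = 1 ∨ om (vv s (n + 1), n + 1) = false))
    ∨ (vv s (n + 1) = vv s n + 1 ∧ om (vv s (n + 1), n + 1) = true) := by
  rcases Nat.lt_or_ge (n + 1) 7 with h7 | h7
  · left
    rw [vv_small s h7, vv_small s (by omega : n < 7)]
    exact ⟨rfl, Or.inl rfl⟩
  rcases Nat.eq_or_lt_of_le h7 with h7e | h8
  · -- n = 6
    have hn : n = 6 := by omega
    subst hn
    have hv6 : vv s 6 = 1 := vv_small s (by norm_num)
    have hv7 : vv s 7 = 2 := by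
      rw [vv_in_window s (le_refl 2) (by norm_num) (by norm_num)]
      norm_num [HH, bb]
    have hphi : phi 7 = 2 := by
      rw [phi_eq (q := 2) (by norm_num) (by norm_num)]
      norm_num
    right
    refine ⟨by rw [hv6, hv7], ?_⟩
    rw [hv7, om_eq_true]
    right
    show phi 7 ≤ 2
    omega
  · -- n + 1 ≥ 8
    have hlog3 : 3 ≤ Nat.log 2 (n + 1) := by
      rw [Nat.le_log_iff_pow_le (by norm_num) (by omega)]
      norm_num
      omega
    set q := Nat.log 2 (n + 1) - 1 with hqdef
    have hq2 : 2 ≤ q := by omega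
    have hlq : Nat.log 2 (n + 1) = q + 1 := by omega
    have hA : 2 ^ (q + 1) ≤ n + 1 := by
      rw [← hlq]; exact Nat.pow_log_le_self 2 (by omega)
    have hB : n + 1 < 2 ^ (q + 2) := by
      have h := Nat.lt_pow_succ_log_self (by norm_num : 1 < 2) (n + 1)
      rw [hlq] at h
      exact h
    have hvn : vv s n = HH s q + (n + bb s (q + 1) - (2 ^ (q + 2) - HH s q)) :=
      vv_in_window s hq2 hA hB
    have hphi : phi (n + 1) = 2 ^ (q + 2) + 1 - (n + 1) := phi_eq hA hB
    have h8X : 8 * HH s q ≤ 2 ^ (q + 2) := HH_le' s hq2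
    have hbb : bb s (q + 1) ≤ 1 := bb_le s (q + 1)
    have hX2 : 2 ≤ HH s q := HH_two_le' s hq2
    by_cases hbd : n + 2 < 2 ^ (q + 2)
    · -- n and n+1 in the same window
      have hvn1 : vv s (n + 1) = HH s q + (n + 1 + bb s (q + 1) - (2 ^ (q + 2) - HH s q)) :=
        vv_in_window s hq2 (by omega) hbd
      have hsafe : ¬ Safe (HH s q) := not_safe_HH s q hq2
      by_cases hcase : n + 1 + bb s (q + 1) ≤ 2 ^ (q + 2) - HH s q
      · -- sitting
        left
        have hveq : vv s (n + 1) = HH s q := by rw [hvn1]; omega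
        refine ⟨by rw [hvn, hveq]; omega, Or.inr ?_⟩
        rw [om_eq_false, hveq]
        exact ⟨hsafe, by omega⟩
      · -- riding
        right
        refine ⟨by rw [hvn, hvn1]; omega, ?_⟩
        rw [om_eq_true]
        right
        rw [hvn1]
        omega
    · -- window boundary: n + 2 = 2^(q+2)
      have hn2 : n + 2 = 2 ^ (q + 2) := by omega
      have hp23 : (2:ℕ) ^ (q + 3) = 2 * 2 ^ (q + 2) := by ring
      have hA' : 2 ^ (q + 2) ≤ n + 2 := by omega
      have hB' : n + 2 < 2 ^ (q + 3) := by omega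
      have hvn1 : vv s (n + 1) =
          HH s (q + 1) + (n + 1 + bb s (q + 2) - (2 ^ (q + 3) - HH s (q + 1))) :=
        vv_in_window s (by omega) hA' hB'
      have h8X' : 8 * HH s (q + 1) ≤ 2 ^ (q + 3) := HH_le' s (by omega)
      have hbb' : bb s (q + 2) ≤ 1 := bb_le s (q + 2)
      have hX2' : 2 ≤ HH s (q + 1) := HH_two_le' s (by omega)
      have hHs : HH s (q + 1) = 2 * HH s q + bb s (q + 1) - 1 := HH_succ' s hq2
      right
      constructor
      · rw [hvn, hvn1]
        omega
      · rw [om_eq_true]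
        right
        rw [hvn1]
        omega

lemma vv_pos (s : ℕ → Bool) (t : ℕ) : 1 ≤ vv s t := by
  unfold vv
  split
  · exact le_refl 1
  · exact le_trans (HH_pos s _) (Nat.le_add_right _ _)

lemma isPath_vv (s : ℕ → Bool) : IsPathB (vv s) := by
  refine ⟨vv_pos s, fun n => ?_⟩
  rcases key_step s n with ⟨h, _⟩ | ⟨h, _⟩
  · exact Or.inl h
  · exact Or.inr h

lemma minPath_vv (s : ℕ → Bool) : MinPathB om (vv s) := by
  intro n
  rcases key_step s n with ⟨he, h1 | hf⟩ | ⟨he, ht⟩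
  · exact Or.inl h1
  · right
    rw [hf, he]
    simp
  · right
    rw [ht, he]
    simp

lemma vv_start (s : ℕ → Bool) {q : ℕ} (hq : 2 ≤ q) : vv s (2 ^ (q + 1) - 1) = HH s q := by
  have hp1 : 1 ≤ (2:ℕ) ^ (q + 1) := Nat.one_le_two_pow
  have hp2 : (2:ℕ) ^ (q + 2) = 2 * 2 ^ (q + 1) := by ring
  have h8X : 8 * HH s q ≤ 2 ^ (q + 2) := HH_le' s hq
  have hbb : bb s (q + 1) ≤ 1 := bb_le s (q + 1)
  have h8 : (8:ℕ) ≤ 2 ^ (q + 1) := by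
    calc (8:ℕ) = 2 ^ 3 := by norm_num
    _ ≤ 2 ^ (q + 1) := Nat.pow_le_pow_right (by norm_num) (by omega)
  rw [vv_in_window s hq (by omega) (by omega)]
  omega

lemma vv_injective : Function.Injective (fun s : ℕ → Bool => vv s) := by
  intro s s' h
  simp only at h
  have hH : ∀ q, 2 ≤ q → HH s q = HH s' q := by
    intro q hq
    have h1 := vv_start s hq
    have h2 := vv_start s' hq
    rw [← h1, ← h2, h]
  have hbbeq : ∀ q, 2 ≤ q → bb s (q + 1) = bb s' (q + 1) := by
    intro q hq
    have e1 := HH_succ' s hq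
    have e2 := HH_succ' s' hq
    have g1 := hH q hq
    have g2 := hH (q + 1) (by omega)
    have g3 := HH_two_le' s hq
    omega
  funext i
  have := hbbeq (i + 3) (by omega)
  simp only [bb] at this
  rcases hs : s i <;> rcases hs' : s' i <;> rw [hs, hs'] at this <;> simp at this


/-! ### Maximal paths -/

lemma max_const_mem {c : ℕ} (hc : c = 1 ∨ Safe c) :
    IsPathB (fun _ => c) ∧ MaxPathB om (fun _ => c) := by
  have hc1 : 1 ≤ c := by
    rcases hc with rfl | ⟨m, rfl⟩
    · exact le_refl 1
    · have : 1 ≤ (2:ℕ) ^ m := Nat.one_le_two_pow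
      omega
  refine ⟨⟨fun _ => hc1, fun _ => Or.inl rfl⟩, fun n => ?_⟩
  rcases hc with rfl | hs
  · exact Or.inl rfl
  · right
    have ht : om (c, n + 1) = true := om_eq_true.mpr (Or.inl hs)
    rw [ht]
    simp

lemma max_path_eq_const {v : ℕ → ℕ} (hp : IsPathB v) (hm : MaxPathB om v) :
    ∃ c, (c = 1 ∨ Safe c) ∧ v = fun _ => c := by
  obtain ⟨hpos, hstep⟩ := hp
  have hmono : Monotone v :=
    monotone_nat_of_le_succ (fun n => by rcases hstep n with h | h <;> omega)
  have hrise : ∀ n, v (n + 1) = v n + 1 → Safe (v n + 1) → False := by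
    intro n h hS
    rcases hm n with h1 | h2
    · have := hpos n
      omega
    · rw [h] at h2
      rw [om_eq_true.mpr (Or.inl hS)] at h2
      simp at h2
  have hcross : ∀ c, v 0 < c → ∀ N, c ≤ v N →
      ∃ n, v (n + 1) = v n + 1 ∧ v (n + 1) = c := by
    intro c h0 N
    induction N with
    | zero => intro h; omega
    | succ N ih =>
      intro h
      by_cases hN : c ≤ v N
      · exact ih hN
      · have hs := hstep N
        exact ⟨N, by omega, by omega⟩
  by_cases hbd : ∃ B, ∀ k, v k ≤ B
  · obtain ⟨B, hB⟩ := hbd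
    have hne : (Set.range v).Nonempty := ⟨v 0, 0, rfl⟩
    have hbdd : BddAbove (Set.range v) := ⟨B, by rintro x ⟨k, rfl⟩; exact hB k⟩
    obtain ⟨N, hN⟩ := Nat.sSup_mem hne hbdd
    set L := sSup (Set.range v) with hLdef
    have hub : ∀ k, v k ≤ L := fun k => le_csSup hbdd ⟨k, rfl⟩
    have hconst : ∀ k, N ≤ k → v k = L := fun k hk => le_antisymm (hub k) (hN ▸ hmono hk)
    have hLC : L = 1 ∨ Safe L := by
      by_contra hcon
      push_neg at hcon
      obtain ⟨hL1, hLS⟩ := hcon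
      set j := N + L + 1 with hj
      have hjlt : j < 2 ^ j := Nat.lt_two_pow_self (n := j)
      have hk1 : v (2 ^ j - 1) = L := hconst _ (by omega)
      have hk2 : v (2 ^ j - 1 + 1) = L := hconst _ (by omega)
      rcases hm (2 ^ j - 1) with h1 | h2
      · rw [hk2] at h1
        exact hL1 h1
      · rw [hk2, hk1] at h2
        have hsub : 2 ^ j - 1 + 1 = 2 ^ j := by omega
        rw [hsub] at h2
        have hphi : phi (2 ^ j) = 2 ^ j + 1 := phi_pow j
        have homf : om (L, 2 ^ j) = false := om_eq_false.mpr ⟨hLS, by omega⟩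
        rw [homf] at h2
        simp at h2
    have h0L : v 0 = L := by
      by_contra h0
      have hlt : v 0 < L := lt_of_le_of_ne (hub 0) h0
      obtain ⟨n, hn1, hn2⟩ := hcross L hlt N (hconst N (le_refl N)).ge
      rcases hLC with h1 | hLS
      · have := hpos n
        omega
      · exact hrise n hn1 (by rw [← hn2] at hLS; rw [hn1] at hLS; exact hLS)
    exact ⟨L, hLC, funext fun k => le_antisymm (hub k) (h0L ▸ hmono (Nat.zero_le k))⟩
  · push_neg at hbd
    obtain ⟨k, hk⟩ := hbd (5 * 2 ^ v 0)
    exfalso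
    have h0 : v 0 < 5 * 2 ^ v 0 := by
      have h1 := Nat.lt_two_pow_self (n := v 0)
      have h2 : (2:ℕ) ^ v 0 ≤ 5 * 2 ^ v 0 := by omega
      omega
    obtain ⟨n, hn1, hn2⟩ := hcross (5 * 2 ^ v 0) h0 k (le_of_lt hk)
    apply hrise n hn1
    rw [← hn1, hn2]
    exact ⟨v 0, rfl⟩

lemma max_set_eq : {v : ℕ → ℕ | IsPathB v ∧ MaxPathB om v} =
    (fun c : ℕ => (fun _ : ℕ => c)) '' {c | c = 1 ∨ Safe c} := by
  ext v
  constructor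
  · rintro ⟨hp, hm⟩
    obtain ⟨c, hc, rfl⟩ := max_path_eq_const hp hm
    exact ⟨c, hc, rfl⟩
  · rintro ⟨c, hc, rfl⟩
    exact max_const_mem hc

lemma const_inj : Function.Injective (fun c : ℕ => (fun _ : ℕ => c)) :=
  fun _ _ h => congrFun h 0

lemma card_T : Cardinal.mk {c : ℕ | c = 1 ∨ Safe c} = Cardinal.aleph0 := by
  apply le_antisymm
  · exact Cardinal.mk_le_aleph0
  · rw [Cardinal.aleph0_le_mk_iff, Set.infinite_coe_iff]
    apply Set.infinite_of_injective_forall_mem (f := fun m : ℕ => 5 * 2 ^ m)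
    · intro a b h
      simp only at h
      have h2 : (2:ℕ) ^ a = 2 ^ b := by omega
      exact Nat.pow_right_injective (le_refl 2) h2
    · intro m
      exact Or.inr ⟨m, rfl⟩

lemma card_max : Cardinal.mk {v : ℕ → ℕ | IsPathB v ∧ MaxPathB om v} = Cardinal.aleph0 := by
  rw [max_set_eq, Cardinal.mk_image_eq const_inj, card_T]

lemma card_min : Cardinal.mk {v : ℕ → ℕ | IsPathB v ∧ MinPathB om v} = Cardinal.continuum := by
  apply le_antisymm
  · calc Cardinal.mk {v : ℕ → ℕ | IsPathB v ∧ MinPathB om v}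
        ≤ Cardinal.mk (ℕ → ℕ) := Cardinal.mk_set_le _
      _ = Cardinal.continuum := by
          rw [← Cardinal.power_def ℕ ℕ, Cardinal.mk_nat,
            Cardinal.power_self_eq (le_refl _), Cardinal.two_power_aleph0]
  · have h2 : Cardinal.mk (ℕ → Bool) = Cardinal.continuum := by
      rw [← Cardinal.power_def Bool ℕ, Cardinal.mk_bool, Cardinal.mk_nat,
        Cardinal.two_power_aleph0]
    have hinj : Function.Injective
        (fun s : ℕ → Bool => (⟨vv s, isPath_vv s, minPath_vv s⟩ :
          {v : ℕ → ℕ | IsPathB v ∧ MinPathB om v})) := by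
      intro a b h
      exact vv_injective (congrArg Subtype.val h)
    have := Cardinal.mk_le_of_injective hinj
    rwa [h2] at this

end PB

/-- there is an order on `B` with continuum many minimal infinite paths and
countably infinitely many maximal infinite paths. -/
theorem one_sided_order_continuum_min_countable_max :
    ∃ ω : ℕ × ℕ → Bool,
      Cardinal.mk {v : ℕ → ℕ | IsPathB v ∧ MinPathB ω v} = Cardinal.continuum ∧
      Cardinal.mk {v : ℕ → ℕ | IsPathB v ∧ MaxPathB ω v} = Cardinal.aleph0 := by
  exact ⟨PB.om, PB.card_min, PB.card_max⟩
end
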